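/- Let N_a, N_b, N_c be mutually independent centered real Gaussian random variables with variances a, b, c > 0 respectively. Then P(N_a > N_b > N_c) = (1/(2π))·arctan(√(ab + bc + ac)/b). -/

import Mathlib

open MeasureTheory Real Set Filter
open scoped ENNReal NNReal

noncomputable def gs (x : ℝ) : ℝ := rexp (-x^2/2)

lemma gs_eq : gs = fun x => rexp (-(1/2 : ℝ) * x^2) := by
  funext x; unfold gs; ring_nf

lemma gs_cont : Continuous gs := by
  unfold gs; fun_prop

lemma gs_nonneg (x : ℝ) : 0 ≤ gs x := (exp_pos _).le

lemma gs_le_one (x : ℝ) : gs x ≤ 1 := by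
  unfold gs
  rw [exp_le_one_iff]
  nlinarith [sq_nonneg x]

lemma gs_neg (x : ℝ) : gs (-x) = gs x := by unfold gs; rw [neg_sq]

lemma gs_integrable : Integrable gs := by
  rw [gs_eq]; exact integrable_exp_neg_mul_sq (by norm_num)

lemma integral_gs : ∫ x, gs x = Real.sqrt (2*π) := by
  rw [gs_eq, integral_gaussian]
  congr 1
  rw [div_div_eq_mul_div, div_one]
  ring

lemma integral_gs_Iio_eq_Ioi : ∫ v in Iio (0:ℝ), gs v = ∫ v in Ioi (0:ℝ), gs v := by
  have := integral_comp_neg_Ioi (0:ℝ) gs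
  simp only [gs_neg, neg_zero] at this
  rw [← integral_Iic_eq_integral_Iio]
  exact this.symm

lemma integral_gs_Ioi_zero : ∫ v in Ioi (0:ℝ), gs v = Real.sqrt (2*π) / 2 := by
  have hsum := intervalIntegral.integral_Iic_add_Ioi
    (gs_integrable.integrableOn (s := Iic (0:ℝ))) (gs_integrable.integrableOn (s := Ioi (0:ℝ)))
  rw [integral_Iic_eq_integral_Iio, integral_gs_Iio_eq_Ioi, integral_gs] at hsum
  linarith

lemma integral_gs_Iio_zero : ∫ v in Iio (0:ℝ), gs v = Real.sqrt (2*π) / 2 := by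
  rw [integral_gs_Iio_eq_Ioi, integral_gs_Ioi_zero]

noncomputable def Gcdf (t : ℝ) : ℝ := ∫ v in Iio t, gs v

lemma hasDerivAt_Gcdf (y : ℝ) : HasDerivAt Gcdf (gs y) y := by
  have key : ∀ t : ℝ, Gcdf t = (∫ v in Iic (0:ℝ), gs v) + ∫ v in (0:ℝ)..t, gs v := by
    intro t
    rw [← intervalIntegral.integral_Iic_sub_Iic
      (gs_integrable.integrableOn) (gs_integrable.integrableOn)]
    unfold Gcdf
    simp only [← integral_Iic_eq_integral_Iio]
    ring
  have h : HasDerivAt (fun t => (∫ v in Iic (0:ℝ), gs v) + ∫ v in (0:ℝ)..t, gs v) (gs y) y := by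
    refine HasDerivAt.const_add _ ?_
    exact intervalIntegral.integral_hasDerivAt_right
      (gs_integrable.intervalIntegrable)
      (gs_cont.stronglyMeasurableAtFilter _ _)
      gs_cont.continuousAt
  exact h.congr_of_eventuallyEq (Eventually.of_forall fun t => key t)

lemma Gcdf_cont : Continuous Gcdf :=
  continuous_iff_continuousAt.2 fun y => (hasDerivAt_Gcdf y).continuousAt

lemma Gcdf_nonneg (t : ℝ) : 0 ≤ Gcdf t :=
  setIntegral_nonneg measurableSet_Iio fun x _ => gs_nonneg x

lemma Gcdf_le (t : ℝ) : Gcdf t ≤ Real.sqrt (2*π) := by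
  rw [← integral_gs]
  exact setIntegral_le_integral gs_integrable (Eventually.of_forall fun x => gs_nonneg x)

lemma integrable_abs_mul_gs_sq {cc : ℝ} (hcc : 0 < cc) :
    Integrable (fun u => |u| * rexp (-cc * u^2)) := by
  have := (integrable_mul_exp_neg_mul_sq hcc).abs
  refine this.congr (Eventually.of_forall fun u => ?_)
  show |u * rexp (-cc * u^2)| = |u| * rexp (-cc * u^2)
  rw [abs_mul, abs_of_pos (exp_pos _)]

lemma integral_Ioi_mul_exp {cc : ℝ} (hcc : 0 < cc) :
    ∫ u in Ioi (0:ℝ), u * rexp (-cc * u^2) = 1/(2*cc) := by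
  have hderiv : ∀ x ∈ Ioi (0:ℝ), HasDerivAt (fun u => -rexp (-cc * u^2)/(2*cc))
      (x * rexp (-cc * x^2)) x := by
    intro x _
    have h1 : HasDerivAt (fun u : ℝ => -cc * u^2) (-cc * (2*x)) x := by
      simpa using ((hasDerivAt_pow 2 x).const_mul (-cc))
    have h2 := (h1.exp).div_const (2*cc)
    have h3 := h2.neg
    have hcc' : cc ≠ 0 := ne_of_gt hcc
    have h4 : x * rexp (-cc * x^2) = -(rexp (-cc * x ^ 2) * (-cc * (2 * x)) / (2 * cc)) := by
      field_simp
    rw [h4]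
    exact h3.congr_of_eventuallyEq (Eventually.of_forall fun u => by simp [neg_div])
  have hint : IntegrableOn (fun x => x * rexp (-cc * x^2)) (Ioi 0) :=
    (integrable_mul_exp_neg_mul_sq hcc).integrableOn
  have htend : Tendsto (fun u => -rexp (-cc * u^2)/(2*cc)) atTop (nhds 0) := by
    have : Tendsto (fun u : ℝ => -cc * u^2) atTop atBot := by
      apply Tendsto.const_mul_atTop_of_neg (by linarith)
      exact tendsto_pow_atTop (by norm_num)
    have h := (Real.tendsto_exp_atBot.comp this).neg.div_const (2*cc)
    simpa using h
  have := integral_Ioi_of_hasDerivAt_of_tendsto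
    (Continuous.continuousWithinAt (by fun_prop)) hderiv hint htend
  rw [this]
  have hcc' : cc ≠ 0 := ne_of_gt hcc
  field_simp
  simp

noncomputable def Jf (k : ℝ) : ℝ := ∫ u in Ioi (0:ℝ), gs u * Gcdf (k * u)

lemma gs_mul_cont (x : ℝ) : Continuous fun u : ℝ => gs u * Gcdf (x * u) :=
  gs_cont.mul (Gcdf_cont.comp (continuous_const.mul continuous_id))

lemma integrable_gs_mul_Gcdf (x : ℝ) :
    Integrable (fun u => gs u * Gcdf (x * u)) (volume.restrict (Ioi 0)) := by
  refine Integrable.mono ((gs_integrable.const_mul (Real.sqrt (2*π))).restrict)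
    ((gs_mul_cont x).aestronglyMeasurable).restrict ?_
  refine Eventually.of_forall fun u => ?_
  rw [Real.norm_eq_abs, abs_of_nonneg (mul_nonneg (gs_nonneg u) (Gcdf_nonneg _)),
    Real.norm_eq_abs, abs_of_nonneg (mul_nonneg (Real.sqrt_nonneg _) (gs_nonneg u))]
  calc gs u * Gcdf (x*u) ≤ gs u * Real.sqrt (2*π) :=
        mul_le_mul_of_nonneg_left (Gcdf_le _) (gs_nonneg u)
    _ = Real.sqrt (2*π) * gs u := by ring

lemma Jf_hasDerivAt (k : ℝ) : HasDerivAt Jf (1/(1+k^2)) k := by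
  have hbint : Integrable (fun u : ℝ => |u| * gs u) := by
    have h := integrable_abs_mul_gs_sq (by norm_num : (0:ℝ) < 1/2)
    refine h.congr (Eventually.of_forall fun u => ?_)
    rw [gs_eq]
  have key := hasDerivAt_integral_of_dominated_loc_of_deriv_le
    (F := fun x u => gs u * Gcdf (x * u))
    (F' := fun x u => gs u * (u * gs (x * u)))
    (μ := volume.restrict (Ioi (0:ℝ))) (x₀ := k)
    (bound := fun u => |u| * gs u)
    (Metric.ball_mem_nhds k one_pos)
    (Eventually.of_forall fun x => ((gs_mul_cont x).aestronglyMeasurable).restrict)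
    (integrable_gs_mul_Gcdf k)
    ((gs_cont.mul (continuous_id.mul (gs_cont.comp
      (continuous_const.mul continuous_id)))).aestronglyMeasurable).restrict
    (Eventually.of_forall fun u => fun x _ => by
      show ‖gs u * (u * gs (x * u))‖ ≤ |u| * gs u
      rw [Real.norm_eq_abs, abs_mul, abs_mul, abs_of_nonneg (gs_nonneg u),
        abs_of_nonneg (gs_nonneg (x*u))]
      calc gs u * (|u| * gs (x*u)) ≤ gs u * (|u| * 1) := by
            refine mul_le_mul_of_nonneg_left ?_ (gs_nonneg u)
            exact mul_le_mul_of_nonneg_left (gs_le_one _) (abs_nonneg u)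
        _ = |u| * gs u := by ring)
    hbint.restrict
    (Eventually.of_forall fun u => fun x _ => by
      have h1 : HasDerivAt (fun x : ℝ => x * u) u x := hasDerivAt_mul_const u
      have h2 := (hasDerivAt_Gcdf (x*u)).comp x h1
      have h3 := h2.const_mul (gs u)
      rw [show gs u * (u * gs (x * u)) = gs u * (gs (x * u) * u) by ring]
      exact h3)
  have hDeriv := key.2
  have heval : ∫ u in Ioi (0:ℝ), gs u * (u * gs (k * u)) = 1/(1+k^2) := by
    have hpt : ∀ u : ℝ, gs u * (u * gs (k*u)) = u * rexp (-((1+k^2)/2) * u^2) := by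
      intro u
      unfold gs
      rw [show (-((1+k^2)/2) * u^2) = -u^2/2 + -(k*u)^2/2 by ring, Real.exp_add]
      ring
    simp_rw [hpt]
    rw [integral_Ioi_mul_exp (by positivity : (0:ℝ) < (1+k^2)/2)]
    rw [show 2*((1+k^2)/2) = 1+k^2 by ring]
  rw [← heval]
  exact hDeriv

lemma Jf_eq (k : ℝ) : Jf k = π/2 + arctan k := by
  have hconst : Jf k - arctan k = Jf 0 - arctan 0 := by
    exact is_const_of_deriv_eq_zero (f := fun z => Jf z - arctan z)
      (fun z => ((Jf_hasDerivAt z).sub (Real.hasDerivAt_arctan z)).differentiableAt)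
      (fun z => by
        show deriv (Jf - arctan) z = 0
        rw [((Jf_hasDerivAt z).sub (Real.hasDerivAt_arctan z)).deriv]
        exact sub_self _) k 0
  have h0 : Jf 0 = π/2 := by
    unfold Jf
    simp only [zero_mul]
    rw [integral_mul_const, integral_gs_Ioi_zero]
    unfold Gcdf
    rw [integral_gs_Iio_zero]
    have h2π : (0:ℝ) ≤ 2*π := by positivity
    have := Real.mul_self_sqrt h2π
    nlinarith
  rw [h0, arctan_zero, sub_zero] at hconst
  linarith

lemma Jf_compl (k : ℝ) :
    ∫ u in Ioi (0:ℝ), gs u * ∫ v in Ioi (k*u), gs v = π/2 - arctan k := by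
  have hrefl : ∀ m : ℝ, ∫ v in Ioi m, gs v = Gcdf (-m) := by
    intro m
    calc ∫ v in Ioi m, gs v = ∫ v in Ioi m, gs (-v) := by simp [gs_neg]
      _ = ∫ v in Iic (-m), gs v := integral_comp_neg_Ioi m gs
      _ = Gcdf (-m) := integral_Iic_eq_integral_Iio
  simp_rw [hrefl, show ∀ u:ℝ, -(k*u) = (-k)*u from fun u => by ring]
  have := Jf_eq (-k)
  unfold Jf at this
  rw [this, arctan_neg]
  ring

noncomputable def phiv (v x : ℝ) : ℝ := (Real.sqrt (2*π*v))⁻¹ * rexp (-x^2/(2*v))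

lemma phiv_nonneg (v x : ℝ) : 0 ≤ phiv v x := by
  unfold phiv; positivity

lemma phiv_cont (v : ℝ) : Continuous (phiv v) := by
  unfold phiv; fun_prop

lemma phiv_eq (v : ℝ) (hv : 0 < v) :
    phiv v = fun x => (Real.sqrt (2*π*v))⁻¹ * rexp (-(2*v)⁻¹ * x^2) := by
  funext x; unfold phiv; ring_nf

lemma phiv_integrable (v : ℝ) (hv : 0 < v) : Integrable (phiv v) := by
  rw [phiv_eq v hv]
  exact (integrable_exp_neg_mul_sq (by positivity)).const_mul _

lemma integral_phiv (v : ℝ) (hv : 0 < v) : ∫ x, phiv v x = 1 := by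
  rw [phiv_eq v hv]
  rw [integral_const_mul, integral_gaussian]
  rw [← Real.sqrt_inv, ← Real.sqrt_mul (by positivity)]
  rw [show (2*π*v)⁻¹ * (π / (2*v)⁻¹) = 1 by field_simp]
  exact Real.sqrt_one

-- shift: ∫_{Ioi y} φ = ∫_{s>0} φ (y+s)
lemma integral_Ioi_shift (f : ℝ → ℝ) (y : ℝ) :
    ∫ x in Ioi y, f x = ∫ s in Ioi 0, f (y + s) := by
  have hmp : MeasurePreserving (fun s : ℝ => s + y) volume volume :=
    measurePreserving_add_right volume y
  have hemb : MeasurableEmbedding (fun s : ℝ => s + y) :=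
    (Homeomorph.addRight y).measurableEmbedding
  have hpre : (fun s : ℝ => s + y) ⁻¹' (Ioi y) = Ioi 0 := by
    ext s; simp
  have := hmp.setIntegral_preimage_emb hemb f (Ioi y)
  rw [hpre] at this
  rw [← this]
  exact setIntegral_congr_fun measurableSet_Ioi (fun s _ => by rw [add_comm])

lemma integral_Iio_reflect (f : ℝ → ℝ) (y : ℝ) :
    ∫ z in Iio y, f z = ∫ t in Ioi 0, f (y - t) := by
  have hmp : MeasurePreserving (fun t : ℝ => y - t) volume volume :=
    Measure.measurePreserving_sub_left volume y
  have hemb : MeasurableEmbedding (fun t : ℝ => y - t) := by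
    have : (fun t : ℝ => y - t) = (fun t : ℝ => y + t) ∘ (fun t : ℝ => -t) := by
      funext t; simp [sub_eq_add_neg]
    rw [this]
    exact (Homeomorph.addLeft y).measurableEmbedding.comp
      (Homeomorph.neg ℝ).measurableEmbedding
  have hpre : (fun t : ℝ => y - t) ⁻¹' (Iio y) = Ioi 0 := by
    ext t; simp
  have := hmp.setIntegral_preimage_emb hemb f (Iio y)
  rw [hpre] at this
  rw [← this]

lemma integral_exp_quad (p q r : ℝ) (hp : 0 < p) :
    ∫ y : ℝ, rexp (-(p*y^2 + q*y + r)) = Real.sqrt (π/p) * rexp (q^2/(4*p) - r) := by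
  have hsq : ∀ y : ℝ, rexp (-(p*y^2 + q*y + r))
      = rexp (q^2/(4*p) - r) * rexp (-p * (y + q/(2*p))^2) := by
    intro y
    rw [← Real.exp_add]
    congr 1
    field_simp
    ring
  simp_rw [hsq]
  rw [integral_const_mul]
  rw [integral_add_right_eq_self (fun y => rexp (-p * y^2)) (q/(2*p))]
  rw [integral_gaussian]
  ring

lemma eq_of_sq {x y : ℝ} (hx : 0 ≤ x) (hy : 0 ≤ y) (h : x^2 = y^2) : x = y := by
  nlinarith [sq_nonneg (x - y), sq_nonneg (x + y)]

lemma integral_y_eval (a b c s t : ℝ) (ha : 0 < a) (hb : 0 < b) (hc : 0 < c) :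
    ∫ y : ℝ, phiv a (y+s) * phiv b y * phiv c (y-t)
      = (2*π*Real.sqrt (a*b+b*c+a*c))⁻¹ *
        rexp (-(((b+c)*s^2 + 2*b*s*t + (a+b)*t^2)/(a*b+b*c+a*c))/2) := by
  set S := a*b+b*c+a*c with hS_def
  have hS : 0 < S := by positivity
  set p : ℝ := (1/a+1/b+1/c)/2 with hp_def
  have hp : 0 < p := by positivity
  set q : ℝ := s/a - t/c with hq_def
  set r : ℝ := (s^2/a + t^2/c)/2 with hr_def
  have hpt : ∀ y : ℝ, phiv a (y+s) * phiv b y * phiv c (y-t)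
      = ((Real.sqrt (2*π*a))⁻¹*(Real.sqrt (2*π*b))⁻¹*(Real.sqrt (2*π*c))⁻¹)
        * rexp (-(p*y^2 + q*y + r)) := by
    intro y
    unfold phiv
    rw [show -(p*y^2 + q*y + r) = -(y+s)^2/(2*a) + (-y^2/(2*b) + -(y-t)^2/(2*c)) by
      rw [hp_def, hq_def, hr_def]; field_simp; ring]
    rw [Real.exp_add, Real.exp_add]
    ring
  simp_rw [hpt]
  rw [integral_const_mul, integral_exp_quad p q r hp]
  have hconst : ((Real.sqrt (2*π*a))⁻¹*(Real.sqrt (2*π*b))⁻¹*(Real.sqrt (2*π*c))⁻¹)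
      * Real.sqrt (π/p) = (2*π*Real.sqrt S)⁻¹ := by
    have sa2 : (Real.sqrt (2*π*a))^2 = 2*π*a := Real.sq_sqrt (by positivity)
    have sb2 : (Real.sqrt (2*π*b))^2 = 2*π*b := Real.sq_sqrt (by positivity)
    have sc2 : (Real.sqrt (2*π*c))^2 = 2*π*c := Real.sq_sqrt (by positivity)
    have sp2 : (Real.sqrt (π/p))^2 = π/p := Real.sq_sqrt (by positivity)
    have sS2 : (Real.sqrt S)^2 = S := Real.sq_sqrt hS.le
    apply eq_of_sq (by positivity) (by positivity)
    rw [show (((Real.sqrt (2*π*a))⁻¹*(Real.sqrt (2*π*b))⁻¹*(Real.sqrt (2*π*c))⁻¹)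
        * Real.sqrt (π/p))^2
      = ((Real.sqrt (2*π*a))^2)⁻¹ * ((Real.sqrt (2*π*b))^2)⁻¹ * ((Real.sqrt (2*π*c))^2)⁻¹
        * (Real.sqrt (π/p))^2 by ring]
    rw [sa2, sb2, sc2, sp2]
    rw [show ((2*π*Real.sqrt S)⁻¹)^2 = ((2*π)^2 * (Real.sqrt S)^2)⁻¹ by ring]
    rw [sS2, hp_def, hS_def]
    have hπ := Real.pi_pos
    field_simp
    ring
  have hexp : q^2/(4*p) - r = -(((b+c)*s^2 + 2*b*s*t + (a+b)*t^2)/S)/2 := by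
    rw [hq_def, hp_def, hr_def, hS_def]
    field_simp
    ring
  rw [hexp, ← hconst]
  ring

lemma lintegral_Ioi_affine {m : ℝ} (hm : 0 < m) (d e0 : ℝ) (h : ℝ → ℝ≥0∞)
    (hmeas : Measurable h) :
    ∫⁻ t in Ioi e0, h t = ENNReal.ofReal m * ∫⁻ v in Ioi ((e0 - d)/m), h (m * v + d) := by
  have hgm : Measurable (fun v : ℝ => m*v + d) := by fun_prop
  have hmap : Measure.map (fun v : ℝ => m*v + d) volume
      = ENNReal.ofReal |m⁻¹| • (volume : Measure ℝ) := by
    have hcomp : (fun v : ℝ => m*v + d) = (fun x : ℝ => x + d) ∘ (fun v : ℝ => m * v) := rfl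
    rw [hcomp, ← Measure.map_map (by fun_prop) (by fun_prop),
      Real.map_volume_mul_left hm.ne', Measure.map_smul,
      map_add_right_eq_self volume d]
  have hpre : (fun v : ℝ => m*v + d) ⁻¹' (Ioi e0) = Ioi ((e0 - d)/m) := by
    ext v
    simp only [mem_preimage, mem_Ioi]
    rw [div_lt_iff₀ hm]
    constructor <;> intro <;> linarith
  have hsmul : (volume : Measure ℝ) = ENNReal.ofReal m • (ENNReal.ofReal |m⁻¹| • volume) := by
    rw [smul_smul, ← ENNReal.ofReal_mul hm.le, abs_of_pos (by positivity),
      mul_inv_cancel₀ hm.ne', ENNReal.ofReal_one, one_smul]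
  calc ∫⁻ t in Ioi e0, h t ∂volume
      = ∫⁻ t in Ioi e0, h t ∂(ENNReal.ofReal m • (ENNReal.ofReal |m⁻¹| • volume)) := by
        rw [← hsmul]
    _ = ENNReal.ofReal m * ∫⁻ t in Ioi e0, h t ∂(ENNReal.ofReal |m⁻¹| • volume) := by
        rw [Measure.restrict_smul, lintegral_smul_measure, smul_eq_mul]
    _ = ENNReal.ofReal m * ∫⁻ t in Ioi e0, h t ∂(Measure.map (fun v : ℝ => m*v + d) volume) := by
        rw [hmap]
    _ = ENNReal.ofReal m * ∫⁻ t, h t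
          ∂(Measure.map (fun v : ℝ => m*v + d) (volume.restrict ((fun v : ℝ => m*v + d) ⁻¹' (Ioi e0)))) := by
        rw [Measure.restrict_map hgm measurableSet_Ioi]
    _ = ENNReal.ofReal m * ∫⁻ v in (fun v : ℝ => m*v + d) ⁻¹' (Ioi e0), h (m*v + d) := by
        rw [lintegral_map hmeas hgm]
    _ = ENNReal.ofReal m * ∫⁻ v in Ioi ((e0 - d)/m), h (m*v + d) := by rw [hpre]

lemma Qf_subst (a b c u v : ℝ) (ha : 0 < a) (hb : 0 < b) (hc : 0 < c) :
    ((b+c)*(Real.sqrt (a+b)*u)^2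
      + 2*b*(Real.sqrt (a+b)*u)*((Real.sqrt (a*b+b*c+a*c)*v - b*u)/Real.sqrt (a+b))
      + (a+b)*((Real.sqrt (a*b+b*c+a*c)*v - b*u)/Real.sqrt (a+b))^2)/(a*b+b*c+a*c)
    = u^2 + v^2 := by
  set σ := Real.sqrt (a+b) with hσ_def
  set s1 := Real.sqrt (a*b+b*c+a*c) with hs1_def
  have hσ2 : σ^2 = a+b := Real.sq_sqrt (by positivity)
  have hs12 : s1^2 = a*b+b*c+a*c := Real.sq_sqrt (by positivity)
  have hσ0 : σ ≠ 0 := by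
    rw [hσ_def]; positivity
  have hS0 : a*b+b*c+a*c ≠ 0 := by positivity
  have hab0 : a+b ≠ 0 := by positivity
  have e1 : (σ*u)^2 = (a+b)*u^2 := by rw [mul_pow, hσ2]
  have e2 : 2*b*(σ*u)*((s1*v - b*u)/σ) = 2*b*u*(s1*v - b*u) := by
    field_simp
  have e3 : ((s1*v - b*u)/σ)^2 = (s1*v - b*u)^2/(a+b) := by rw [div_pow, hσ2]
  rw [e1, e2, e3]
  rw [show (a+b)*((s1*v - b*u)^2/(a+b)) = (s1*v - b*u)^2 by field_simp]
  rw [div_eq_iff hS0]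
  linear_combination (v^2)*hs12

lemma gs_mul_gs (u v : ℝ) : rexp (-(u^2+v^2)/2) = gs u * gs v := by
  unfold gs; rw [← Real.exp_add]; congr 1; ring

lemma integral_gs_Ioi_eq_Gcdf (m : ℝ) : ∫ v in Ioi m, gs v = Gcdf (-m) := by
  calc ∫ v in Ioi m, gs v = ∫ v in Ioi m, gs (-v) := by simp [gs_neg]
    _ = ∫ v in Iic (-m), gs v := integral_comp_neg_Ioi m gs
    _ = Gcdf (-m) := integral_Iic_eq_integral_Iio

lemma phiv_le (v x : ℝ) (hv : 0 < v) : phiv v x ≤ (Real.sqrt (2*π*v))⁻¹ := by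
  unfold phiv
  have h1 : rexp (-x^2/(2*v)) ≤ 1 := by
    rw [Real.exp_le_one_iff, neg_div, Left.neg_nonpos_iff]
    positivity
  nth_rewrite 2 [← mul_one ((Real.sqrt (2*π*v))⁻¹)]
  exact mul_le_mul_of_nonneg_left h1 (by positivity)

noncomputable def Qform (a b c s t : ℝ) : ℝ :=
  ((b+c)*s^2 + 2*b*s*t + (a+b)*t^2)/(a*b+b*c+a*c)

lemma pipelineA (a b c : ℝ) (ha : 0 < a) (hb : 0 < b) (hc : 0 < c) :
    ∫⁻ y : ℝ, ENNReal.ofReal (phiv b y * (∫ x in Ioi y, phiv a x) * (∫ z in Iio y, phiv c z))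
      = ∫⁻ s in Ioi (0:ℝ), ∫⁻ t in Ioi (0:ℝ),
          ENNReal.ofReal ((2*π*Real.sqrt (a*b+b*c+a*c))⁻¹ * rexp (-(Qform a b c s t)/2)) := by
  have hF3cont : Continuous (fun z : ℝ × ℝ × ℝ =>
      phiv a (z.1 + z.2.1) * phiv b z.1 * phiv c (z.1 - z.2.2)) :=
    (((phiv_cont a).comp (continuous_fst.add (continuous_fst.comp continuous_snd))).mul
      ((phiv_cont b).comp continuous_fst)).mul
      ((phiv_cont c).comp (continuous_fst.sub (continuous_snd.comp continuous_snd)))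
  have step12 : ∀ y : ℝ,
      ENNReal.ofReal (phiv b y * (∫ x in Ioi y, phiv a x) * (∫ z in Iio y, phiv c z))
      = ∫⁻ p in Ioi (0:ℝ) ×ˢ Ioi (0:ℝ),
          ENNReal.ofReal (phiv a (y+p.1) * phiv b y * phiv c (y-p.2)) := by
    intro y
    rw [integral_Ioi_shift (phiv a) y, integral_Iio_reflect (phiv c) y]
    have hint_a : Integrable (fun s => phiv a (y+s)) (volume.restrict (Ioi 0)) :=
      ((phiv_integrable a ha).comp_add_left y).restrict
    have hint_c : Integrable (fun t => phiv c (y-t)) (volume.restrict (Ioi 0)) :=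
      ((phiv_integrable c hc).comp_sub_left y).restrict
    have hprod : (∫ s in Ioi (0:ℝ), phiv a (y+s)) * (∫ t in Ioi (0:ℝ), phiv c (y-t))
        = ∫ p in Ioi (0:ℝ) ×ˢ Ioi (0:ℝ), phiv a (y+p.1) * phiv c (y-p.2) := by
      rw [← integral_prod_mul (μ := volume.restrict (Ioi (0:ℝ)))
        (ν := volume.restrict (Ioi (0:ℝ))) (fun s => phiv a (y+s)) (fun t => phiv c (y-t))]
      rw [Measure.prod_restrict, ← Measure.volume_eq_prod]
    have hint_prod : IntegrableOn (fun p : ℝ×ℝ => phiv a (y+p.1) * phiv c (y-p.2))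
        (Ioi (0:ℝ) ×ˢ Ioi (0:ℝ)) := by
      unfold IntegrableOn
      rw [Measure.volume_eq_prod, ← Measure.prod_restrict]
      exact hint_a.mul_prod hint_c
    rw [mul_assoc, hprod, ← integral_const_mul]
    rw [ofReal_integral_eq_lintegral_ofReal (hint_prod.const_mul _)
      (Eventually.of_forall fun p => by
        have := phiv_nonneg b y; have := phiv_nonneg a (y+p.1); have := phiv_nonneg c (y-p.2)
        positivity)]
    apply lintegral_congr
    intro p
    congr 1
    ring
  simp_rw [step12]
  rw [lintegral_lintegral_swap ((hF3cont.measurable.ennreal_ofReal).aemeasurable)]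
  have hint_y : ∀ p : ℝ×ℝ,
      Integrable (fun y => phiv a (y+p.1) * phiv b y * phiv c (y-p.2)) := by
    intro p
    refine Integrable.mono
      (((phiv_integrable b hb).const_mul ((Real.sqrt (2*π*a))⁻¹ * (Real.sqrt (2*π*c))⁻¹)))
      (((((phiv_cont a).comp (continuous_id.add continuous_const)).mul (phiv_cont b)).mul
        ((phiv_cont c).comp (continuous_id.sub continuous_const))).aestronglyMeasurable)
      (Eventually.of_forall fun y => ?_)
    have hna := phiv_nonneg a (y+p.1)
    have hnb := phiv_nonneg b y
    have hnc := phiv_nonneg c (y-p.2)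
    rw [Real.norm_eq_abs, Real.norm_eq_abs, abs_of_nonneg (by positivity),
      abs_of_nonneg (by positivity)]
    have h1 : phiv a (y+p.1) * phiv b y ≤ (Real.sqrt (2*π*a))⁻¹ * phiv b y :=
      mul_le_mul_of_nonneg_right (phiv_le a (y+p.1) ha) hnb
    have h2 : phiv a (y+p.1) * phiv b y * phiv c (y-p.2)
        ≤ ((Real.sqrt (2*π*a))⁻¹ * phiv b y) * (Real.sqrt (2*π*c))⁻¹ :=
      mul_le_mul h1 (phiv_le c (y-p.2) hc) hnc (by positivity)
    calc phiv a (y+p.1) * phiv b y * phiv c (y-p.2)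
        ≤ ((Real.sqrt (2*π*a))⁻¹ * phiv b y) * (Real.sqrt (2*π*c))⁻¹ := h2
      _ = (Real.sqrt (2*π*a))⁻¹ * (Real.sqrt (2*π*c))⁻¹ * phiv b y := by ring
  have step45 : ∀ p : ℝ×ℝ,
      ∫⁻ y, ENNReal.ofReal (phiv a (y+p.1) * phiv b y * phiv c (y-p.2))
      = ENNReal.ofReal ((2*π*Real.sqrt (a*b+b*c+a*c))⁻¹ * rexp (-(Qform a b c p.1 p.2)/2)) := by
    intro p
    rw [← ofReal_integral_eq_lintegral_ofReal (hint_y p)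
      (Eventually.of_forall fun y => by
        have := phiv_nonneg b y; have := phiv_nonneg a (y+p.1); have := phiv_nonneg c (y-p.2)
        positivity)]
    rw [integral_y_eval a b c p.1 p.2 ha hb hc]
    rfl
  simp_rw [step45]
  rw [Measure.volume_eq_prod, ← Measure.prod_restrict, lintegral_prod]
  have hm : Measurable (fun p : ℝ×ℝ =>
      (2*π*Real.sqrt (a*b+b*c+a*c))⁻¹ * rexp (-(Qform a b c p.1 p.2)/2)) := by
    unfold Qform
    fun_prop
  exact hm.ennreal_ofReal.aemeasurable

lemma pipelineB (a b c : ℝ) (ha : 0 < a) (hb : 0 < b) (hc : 0 < c) :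
    ∫⁻ s in Ioi (0:ℝ), ∫⁻ t in Ioi (0:ℝ),
        ENNReal.ofReal ((2*π*Real.sqrt (a*b+b*c+a*c))⁻¹ * rexp (-(Qform a b c s t)/2))
      = ENNReal.ofReal ((2*π)⁻¹ * (π/2 - arctan (b/Real.sqrt (a*b+b*c+a*c)))) := by
  have hS : 0 < a*b+b*c+a*c := by positivity
  set s1 := Real.sqrt (a*b+b*c+a*c) with hs1_def
  have hs1 : 0 < s1 := Real.sqrt_pos.mpr hS
  set σ := Real.sqrt (a+b) with hσ_def
  have hσ : 0 < σ := Real.sqrt_pos.mpr (by positivity)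
  have hm2 : 0 < s1/σ := by positivity
  set C : ℝ := (2*π*s1)⁻¹ with hC_def
  have hCpos : 0 < C := by rw [hC_def]; positivity
  have hQmeas : Measurable (fun p : ℝ×ℝ => ENNReal.ofReal (C * rexp (-(Qform a b c p.1 p.2)/2))) := by
    apply Measurable.ennreal_ofReal
    unfold Qform
    fun_prop
  have hinner_meas : Measurable (fun s : ℝ =>
      ∫⁻ t in Ioi (0:ℝ), ENNReal.ofReal (C * rexp (-(Qform a b c s t)/2))) :=
    Measurable.lintegral_prod_right' (f := fun p : ℝ×ℝ =>
      ENNReal.ofReal (C * rexp (-(Qform a b c p.1 p.2)/2))) hQmeas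
  rw [lintegral_Ioi_affine hσ 0 0 _ hinner_meas]
  simp only [zero_sub, neg_zero, zero_div, add_zero]
  have hinner : ∀ u : ℝ,
      (∫⁻ t in Ioi (0:ℝ), ENNReal.ofReal (C * rexp (-(Qform a b c (σ*u) t)/2)))
      = ENNReal.ofReal ((s1/σ) * (C * gs u * Gcdf ((-(b/s1))*u))) := by
    intro u
    have hmeas_t : Measurable (fun t : ℝ => ENNReal.ofReal (C * rexp (-(Qform a b c (σ*u) t)/2))) := by
      apply Measurable.ennreal_ofReal
      unfold Qform
      fun_prop
    rw [lintegral_Ioi_affine hm2 (-(b*u)/σ) 0 _ hmeas_t]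
    have hidx : (0 - -(b*u)/σ)/(s1/σ) = (b/s1)*u := by
      field_simp
      ring
    rw [hidx]
    have hptv : ∀ v : ℝ, ENNReal.ofReal (C * rexp (-(Qform a b c (σ*u) ((s1/σ)*v + -(b*u)/σ))/2))
        = ENNReal.ofReal ((C * gs u) * gs v) := by
      intro v
      have harg : (s1/σ)*v + -(b*u)/σ = (s1*v - b*u)/σ := by
        field_simp
        ring
      rw [harg]
      have hQ : Qform a b c (σ*u) ((s1*v - b*u)/σ) = u^2 + v^2 := by
        unfold Qform
        rw [hσ_def, hs1_def]
        exact Qf_subst a b c u v ha hb hc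
      rw [hQ, gs_mul_gs]
      congr 1
      ring
    simp_rw [hptv]
    have hIntOn : IntegrableOn (fun v => (C * gs u) * gs v) (Ioi ((b/s1)*u)) :=
      (gs_integrable.const_mul (C * gs u)).integrableOn
    rw [← ofReal_integral_eq_lintegral_ofReal hIntOn
      (Eventually.of_forall fun v => by
        have := gs_nonneg u; have := gs_nonneg v; positivity)]
    rw [integral_const_mul, integral_gs_Ioi_eq_Gcdf ((b/s1)*u)]
    rw [← ENNReal.ofReal_mul hm2.le]
    congr 2
    ring_nf
  simp_rw [hinner]
  have hIntOuter : Integrable (fun u => (s1/σ) * (C * gs u * Gcdf ((-(b/s1))*u)))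
      (volume.restrict (Ioi 0)) := by
    have h := (integrable_gs_mul_Gcdf (-(b/s1))).const_mul ((s1/σ) * C)
    refine h.congr (Eventually.of_forall fun u => ?_)
    ring
  rw [← ofReal_integral_eq_lintegral_ofReal hIntOuter
    (Eventually.of_forall fun u => by
      have := gs_nonneg u; have := Gcdf_nonneg ((-(b/s1))*u)
      positivity)]
  have : (∫ u in Ioi (0:ℝ), (s1/σ) * (C * gs u * Gcdf ((-(b/s1))*u)))
      = (s1/σ) * C * Jf (-(b/s1)) := by
    rw [show (fun u => (s1/σ) * (C * gs u * Gcdf ((-(b/s1))*u)))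
        = fun u => ((s1/σ) * C) * (gs u * Gcdf ((-(b/s1))*u)) from funext fun u => by ring]
    rw [integral_const_mul]
    rfl
  rw [this, Jf_eq, arctan_neg, ← ENNReal.ofReal_mul hσ.le]
  congr 1
  have hσ0 : σ ≠ 0 := hσ.ne'
  have hs10 : s1 ≠ 0 := hs1.ne'
  rw [hC_def]
  field_simp
  ring

theorem main_lintegral (a b c : ℝ) (ha : 0 < a) (hb : 0 < b) (hc : 0 < c) :
    ∫⁻ y : ℝ, ENNReal.ofReal (phiv b y * (∫ x in Ioi y, phiv a x) * (∫ z in Iio y, phiv c z))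
      = ENNReal.ofReal ((1/(2*π)) * arctan (Real.sqrt (a*b+b*c+a*c) / b)) := by
  rw [pipelineA a b c ha hb hc, pipelineB a b c ha hb hc]
  congr 1
  have hS : 0 < a*b+b*c+a*c := by positivity
  have hs1 : 0 < Real.sqrt (a*b+b*c+a*c) := Real.sqrt_pos.mpr hS
  have hx : 0 < Real.sqrt (a*b+b*c+a*c)/b := by positivity
  have harc := Real.arctan_inv_of_pos hx
  rw [show b/Real.sqrt (a*b+b*c+a*c) = (Real.sqrt (a*b+b*c+a*c)/b)⁻¹ by rw [inv_div], harc]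
  ring

open ProbabilityTheory

lemma iIndepFun_ae_congr {Ω ι : Type*} [MeasurableSpace Ω] {μ : Measure Ω}
    {β : ι → Type*} [m : ∀ i, MeasurableSpace (β i)] {f g : ∀ i, Ω → β i}
    (h : ∀ i, f i =ᵐ[μ] g i)
    (hf : iIndepFun f μ) : iIndepFun g μ := by
  rw [iIndepFun_iff_measure_inter_preimage_eq_mul] at hf ⊢
  intro S sets hsets
  have hae : ∀ᵐ ω ∂μ, ∀ i ∈ S, f i ω = g i ω :=
    (Filter.eventually_all_finset S).2 fun i _ => h i
  have h1 : (⋂ i ∈ S, g i ⁻¹' sets i) =ᵐ[μ] (⋂ i ∈ S, f i ⁻¹' sets i) := by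
    rw [Filter.eventuallyEq_set]
    filter_upwards [hae] with ω hω
    simp only [Set.mem_iInter, Set.mem_preimage]
    constructor
    · intro H i hi
      rw [hω i hi]
      exact H i hi
    · intro H i hi
      rw [← hω i hi]
      exact H i hi
  rw [measure_congr h1, hf S hsets]
  refine Finset.prod_congr rfl fun i hi => measure_congr ?_
  rw [Filter.eventuallyEq_set]
  filter_upwards [h i] with ω hω
  simp [Set.mem_preimage, hω]

lemma gaussianPDFReal_eq_phiv (v : ℝ≥0) :
    gaussianPDFReal 0 v = phiv (v:ℝ) := by
  funext x
  unfold gaussianPDFReal phiv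
  rw [sub_zero]

theorem gaussian_three_way_ordering_probability
    {Ω : Type*} [MeasureSpace Ω] [IsProbabilityMeasure (ℙ : Measure Ω)]
    (a b c : ℝ≥0) (ha : 0 < a) (hb : 0 < b) (hc : 0 < c)
    (Na Nb Nc : Ω → ℝ)
    (hNa : Measure.map Na ℙ = gaussianReal 0 a)
    (hNb : Measure.map Nb ℙ = gaussianReal 0 b)
    (hNc : Measure.map Nc ℙ = gaussianReal 0 c)
    (hindep : iIndepFun ![Na, Nb, Nc] ℙ) :
    ℙ {ω | Nb ω < Na ω ∧ Nc ω < Nb ω}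
      = ENNReal.ofReal
          ((1 / (2 * π)) * arctan (Real.sqrt ((a : ℝ) * b + b * c + a * c) / b)) := by
  have haR : (0:ℝ) < a := ha
  have hbR : (0:ℝ) < b := hb
  have hcR : (0:ℝ) < c := hc
  -- a.e. measurable versions
  have hNaae : AEMeasurable Na ℙ := by
    by_contra h
    rw [Measure.map_of_not_aemeasurable h] at hNa
    exact (IsProbabilityMeasure.ne_zero (gaussianReal 0 a)) hNa.symm
  have hNbae : AEMeasurable Nb ℙ := by
    by_contra h
    rw [Measure.map_of_not_aemeasurable h] at hNb
    exact (IsProbabilityMeasure.ne_zero (gaussianReal 0 b)) hNb.symm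
  have hNcae : AEMeasurable Nc ℙ := by
    by_contra h
    rw [Measure.map_of_not_aemeasurable h] at hNc
    exact (IsProbabilityMeasure.ne_zero (gaussianReal 0 c)) hNc.symm
  set Na' := hNaae.mk Na with hNa'_def
  set Nb' := hNbae.mk Nb with hNb'_def
  set Nc' := hNcae.mk Nc with hNc'_def
  have hNa'm : Measurable Na' := hNaae.measurable_mk
  have hNb'm : Measurable Nb' := hNbae.measurable_mk
  have hNc'm : Measurable Nc' := hNcae.measurable_mk
  have hNa' : Measure.map Na' ℙ = gaussianReal 0 a :=
    (Measure.map_congr hNaae.ae_eq_mk).symm.trans hNa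
  have hNb' : Measure.map Nb' ℙ = gaussianReal 0 b :=
    (Measure.map_congr hNbae.ae_eq_mk).symm.trans hNb
  have hNc' : Measure.map Nc' ℙ = gaussianReal 0 c :=
    (Measure.map_congr hNcae.ae_eq_mk).symm.trans hNc
  have hindep' : iIndepFun ![Na', Nb', Nc'] ℙ := by
    refine iIndepFun_ae_congr ?_ hindep
    intro i
    fin_cases i
    · exact hNaae.ae_eq_mk
    · exact hNbae.ae_eq_mk
    · exact hNcae.ae_eq_mk
  have hmeas' : ∀ i, Measurable (![Na', Nb', Nc'] i) := by
    intro i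
    fin_cases i
    · exact hNa'm
    · exact hNb'm
    · exact hNc'm
  -- independence of the pair structure
  have hInd1 : IndepFun Na' Nc' ℙ := hindep'.indepFun (i := 0) (j := 2) (by decide)
  have hInd2 : IndepFun (fun ω => (Na' ω, Nc' ω)) Nb' ℙ :=
    hindep'.indepFun_prodMk hmeas' 0 2 1 (by decide) (by decide)
  have hIndSym : IndepFun Nb' (fun ω => (Na' ω, Nc' ω)) ℙ := hInd2.symm
  -- joint law
  have hmapAC : Measure.map (fun ω => (Na' ω, Nc' ω)) ℙ
      = (gaussianReal 0 a).prod (gaussianReal 0 c) := by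
    rw [← hNa', ← hNc']
    exact (indepFun_iff_map_prod_eq_prod_map_map hNa'm.aemeasurable hNc'm.aemeasurable).1 hInd1
  have hmapBAC : Measure.map (fun ω => (Nb' ω, (Na' ω, Nc' ω))) ℙ
      = (gaussianReal 0 b).prod ((gaussianReal 0 a).prod (gaussianReal 0 c)) := by
    rw [← hNb', ← hmapAC]
    exact (indepFun_iff_map_prod_eq_prod_map_map hNb'm.aemeasurable
      (hNa'm.prodMk hNc'm).aemeasurable).1 hIndSym
  -- rewrite event
  have hev : ℙ {ω | Nb ω < Na ω ∧ Nc ω < Nb ω} = ℙ {ω | Nb' ω < Na' ω ∧ Nc' ω < Nb' ω} := by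
    refine measure_congr ?_
    rw [Filter.eventuallyEq_set]
    filter_upwards [hNaae.ae_eq_mk, hNbae.ae_eq_mk, hNcae.ae_eq_mk] with ω h1 h2 h3
    simp only [Set.mem_setOf_eq, h1, h2, h3]
    exact Iff.rfl
  have hU : MeasurableSet {p : ℝ × ℝ × ℝ | p.1 < p.2.1 ∧ p.2.2 < p.1} := by
    rw [Set.setOf_and]
    exact (measurableSet_lt measurable_fst (measurable_fst.comp measurable_snd)).inter
      (measurableSet_lt (measurable_snd.comp measurable_snd) measurable_fst)
  have hev2 : ℙ {ω | Nb' ω < Na' ω ∧ Nc' ω < Nb' ω}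
      = Measure.map (fun ω => (Nb' ω, (Na' ω, Nc' ω))) ℙ
          {p : ℝ × ℝ × ℝ | p.1 < p.2.1 ∧ p.2.2 < p.1} := by
    rw [Measure.map_apply (hNb'm.prodMk (hNa'm.prodMk hNc'm)) hU]
    rfl
  rw [hev, hev2, hmapBAC]
  -- compute product measure
  rw [Measure.prod_apply hU]
  have hsec : ∀ y : ℝ, (Prod.mk y ⁻¹' {p : ℝ × ℝ × ℝ | p.1 < p.2.1 ∧ p.2.2 < p.1})
      = Ioi y ×ˢ Iio y := by
    intro y
    ext q
    simp only [Set.mem_preimage, Set.mem_setOf_eq, Set.mem_prod, mem_Ioi, mem_Iio]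
  have hptwise : ∀ y : ℝ,
      ((gaussianReal 0 a).prod (gaussianReal 0 c))
        (Prod.mk y ⁻¹' {p : ℝ × ℝ × ℝ | p.1 < p.2.1 ∧ p.2.2 < p.1})
      = ENNReal.ofReal (∫ x in Ioi y, phiv a x) * ENNReal.ofReal (∫ z in Iio y, phiv c z) := by
    intro y
    rw [hsec y, Measure.prod_prod]
    rw [gaussianReal_apply_eq_integral 0 ha.ne' , gaussianReal_apply_eq_integral 0 hc.ne']
    rw [gaussianPDFReal_eq_phiv, gaussianPDFReal_eq_phiv]
  rw [lintegral_congr hptwise]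
  -- integrate against the gaussian measure for b
  have hGa_meas : Measurable (fun y => ∫ x in Ioi y, phiv (a:ℝ) x) := by
    have hanti : Antitone (fun y => ∫ x in Ioi y, phiv (a:ℝ) x) := by
      intro y1 y2 h12
      apply setIntegral_mono_set ((phiv_integrable a haR).integrableOn)
        (Eventually.of_forall fun x => phiv_nonneg _ x)
      exact Eventually.of_forall (Ioi_subset_Ioi h12)
    exact hanti.measurable
  have hGc_meas : Measurable (fun y => ∫ z in Iio y, phiv (c:ℝ) z) := by
    have hmono : Monotone (fun y => ∫ z in Iio y, phiv (c:ℝ) z) := by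
      intro y1 y2 h12
      apply setIntegral_mono_set ((phiv_integrable c hcR).integrableOn)
        (Eventually.of_forall fun x => phiv_nonneg _ x)
      exact Eventually.of_forall (Iio_subset_Iio h12)
    exact hmono.measurable
  rw [gaussianReal_of_var_ne_zero 0 hb.ne']
  refine (lintegral_withDensity_eq_lintegral_mul _ (measurable_gaussianPDF 0 b)
    ((hGa_meas.ennreal_ofReal).mul (hGc_meas.ennreal_ofReal))).trans ?_
  have hfinal : ∀ y : ℝ,
      (gaussianPDF 0 b * fun y => ENNReal.ofReal (∫ x in Ioi y, phiv a x)
          * ENNReal.ofReal (∫ z in Iio y, phiv c z)) y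
      = ENNReal.ofReal (phiv b y * (∫ x in Ioi y, phiv a x) * (∫ z in Iio y, phiv c z)) := by
    intro y
    simp only [Pi.mul_apply]
    unfold gaussianPDF
    rw [gaussianPDFReal_eq_phiv, ← mul_assoc,
      ← ENNReal.ofReal_mul (phiv_nonneg _ _),
      ← ENNReal.ofReal_mul (mul_nonneg (phiv_nonneg _ _)
        (setIntegral_nonneg measurableSet_Ioi fun x _ => phiv_nonneg _ x))]
  refine (lintegral_congr hfinal).trans ?_
  exact main_lintegral a b c haR hbR hcR
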